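/- arXiv:2408.07863 — 3 statements merged into one kernel-verified Lean document; each statement's English description precedes it below -/
import Mathlib

section
/- Let n ≥ 1, let λ^{(1)} ∈ {2,3}^n, λ^{(2)} ∈ {1,2,3}^n, λ^{(3)} ∈ {1,3}^n, let P be a 1/2/3-puzzle on Δ_n with boundary conditions (λ^{(1)},λ^{(2)},λ^{(3)}), and let T = 𝒯(P). Then the following are equivalent: (b) no downward face of P has its left edge labeled 3, its right edge labeled 1, and its top edge labeled 2; (c) the triangle T^{(2)} contains no entry equal to 1 whose lower-right neighbor is 3, and no entry equal to 3 whose lower-left neighbor is 2 and whose lower-right neighbor is 3; (d) the triangle T^{(2)} contains no entry equal to 2 whose lower-left neighbor is 3, and no entry equal to 3 whose lower-left neighbor is 3 and whose lower-right neighbor is 1. -/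
/-- Edges of the triangular grid `Δ_n`: an edge is encoded as `(d, x, y)` with
`x + y < n`, where `d = 0` is the horizontal edge `{(x,y),(x+1,y)}`,
`d = 1` is the vertical edge `{(x,y),(x,y+1)}` (parallel to the left side), and
`d = 2` is the diagonal edge `{(x+1,y),(x,y+1)}` (parallel to the right side).
A `1/2/3`-puzzle is an edge labeling by `{1,2,3}` such that the three edges of
each upward face (`P 1 x y`, `P 2 x y`, `P 0 x y`) and of each downward face
(`P 2 x y`, `P 0 x (y+1)`, `P 1 (x+1) y`) get pairwise distinct labels. -/
def IsPuzzle123 (n : ℕ) (P : ℕ → ℕ → ℕ → ℕ) : Prop :=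
  (∀ d x y, d < 3 → x + y < n → P d x y ∈ Finset.Icc 1 3) ∧
  (∀ x y, x + y < n →
      P 1 x y ≠ P 2 x y ∧ P 1 x y ≠ P 0 x y ∧ P 2 x y ≠ P 0 x y) ∧
  (∀ x y, x + y + 1 < n →
      P 2 x y ≠ P 0 x (y + 1) ∧ P 2 x y ≠ P 1 (x + 1) y ∧ P 0 x (y + 1) ≠ P 1 (x + 1) y)

/-- The map `𝒯` from `1/2/3`-puzzles on `Δ_n` to triangular arrays: the `k`-th row
reads the boundary of the copy of `Δ_k` inside `Δ_n` clockwise from the base point: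
the left side bottom to top (`T^(1)`), the right side top to bottom (`T^(2)`),
the bottom side right to left (`T^(3)`). -/
def TofP (n : ℕ) (P : ℕ → ℕ → ℕ → ℕ) : ℕ → ℕ → ℕ → ℕ :=
  fun i j k =>
    if 1 ≤ j ∧ j ≤ k ∧ k ≤ n then
      if i = 1 then P 1 0 (j - 1)
      else if i = 2 then P 2 (j - 1) (k - j)
      else if i = 3 then P 0 (k - j) 0
      else 0
    else 0

private lemma mem13 {p : ℕ} (h : p ∈ Finset.Icc 1 3) : 1 ≤ p ∧ p ≤ 3 := Finset.mem_Icc.mp h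

private lemma TofP2_eq (n : ℕ) (P : ℕ → ℕ → ℕ → ℕ) (j k : ℕ)
    (hj : 1 ≤ j) (hjk : j ≤ k) (hkn : k ≤ n) :
    TofP n P 2 j k = P 2 (j - 1) (k - j) := by
  simp [TofP, hj, hjk, hkn]

private lemma K_to_C (n : ℕ) (P : ℕ → ℕ → ℕ → ℕ) (lam : ℕ → ℕ → ℕ)
    (h1 : ∀ j, 1 ≤ j → j ≤ n → lam 1 j = 2 ∨ lam 1 j = 3)
    (hP : IsPuzzle123 n P)
    (hbd : ∀ j, 1 ≤ j → j ≤ n →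
        P 1 0 (j - 1) = lam 1 j ∧ P 2 (j - 1) (n - j) = lam 2 j ∧
        P 0 (n - j) 0 = lam 3 j) :
    ∀ x y, x + y + 1 < n → P 2 x y = 3 → P 1 (x + 1) y = 1 → P 0 x (y + 1) = 2 →
      (∃ a b, a + b + 2 ≤ n ∧ P 2 a (b + 1) = 1 ∧ P 2 a b = 3) ∨
      (∃ a b, a + b + 3 ≤ n ∧ P 2 (a + 1) (b + 1) = 3 ∧ P 2 a (b + 1) = 2 ∧ P 2 (a + 1) b = 3) := by
  obtain ⟨hB, hU, hD⟩ := hP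
  intro x
  induction x using Nat.strong_induction_on with
  | _ x ih =>
    intro y hxy h2 h1e h0
    obtain ⟨hu1, hu2, hu3⟩ := hU x (y + 1) (by omega)
    obtain ⟨c2l, c2r⟩ := mem13 (hB 2 x (y + 1) (by norm_num) (by omega))
    rw [h0] at hu2 hu3
    rcases (by omega : P 2 x (y + 1) = 1 ∨ P 2 x (y + 1) = 3) with he | he
    · exact Or.inl ⟨x, y, by omega, he, h2⟩
    · obtain ⟨c1l, c1r⟩ := mem13 (hB 1 x (y + 1) (by norm_num) (by omega))
      have hp1 : P 1 x (y + 1) = 1 := by omega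
      cases x with
      | zero =>
          have hb := (hbd (y + 2) (by omega) (by omega)).1
          have hl := h1 (y + 2) (by omega) (by omega)
          have e : (y + 2 : ℕ) - 1 = y + 1 := by omega
          rw [e] at hb
          omega
      | succ x' =>
          obtain ⟨hd1, hd2, hd3⟩ := hD x' (y + 1) (by omega)
          rw [hp1] at hd2 hd3
          obtain ⟨c3l, c3r⟩ := mem13 (hB 2 x' (y + 1) (by norm_num) (by omega))
          rcases (by omega : P 2 x' (y + 1) = 2 ∨ P 2 x' (y + 1) = 3) with hf | hf
          · exact Or.inr ⟨x', y, by omega, he, hf, h2⟩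
          · obtain ⟨c4l, c4r⟩ := mem13 (hB 0 x' (y + 1 + 1) (by norm_num) (by omega))
            rw [hf] at hd1
            have h0' : P 0 x' (y + 1 + 1) = 2 := by omega
            exact ih x' (by omega) (y + 1) (by omega) hf hp1 h0'

private lemma K_to_D (n : ℕ) (P : ℕ → ℕ → ℕ → ℕ) (lam : ℕ → ℕ → ℕ)
    (h3 : ∀ j, 1 ≤ j → j ≤ n → lam 3 j = 1 ∨ lam 3 j = 3)
    (hP : IsPuzzle123 n P)
    (hbd : ∀ j, 1 ≤ j → j ≤ n →
        P 1 0 (j - 1) = lam 1 j ∧ P 2 (j - 1) (n - j) = lam 2 j ∧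
        P 0 (n - j) 0 = lam 3 j) :
    ∀ y x, x + y + 1 < n → P 2 x y = 3 → P 1 (x + 1) y = 1 → P 0 x (y + 1) = 2 →
      (∃ a b, a + b + 2 ≤ n ∧ P 2 (a + 1) b = 2 ∧ P 2 a b = 3) ∨
      (∃ a b, a + b + 3 ≤ n ∧ P 2 (a + 1) (b + 1) = 3 ∧ P 2 a (b + 1) = 3 ∧ P 2 (a + 1) b = 1) := by
  obtain ⟨hB, hU, hD⟩ := hP
  intro y
  induction y using Nat.strong_induction_on with
  | _ y ih =>
    intro x hxy h2 h1e h0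
    obtain ⟨hu1, hu2, hu3⟩ := hU (x + 1) y (by omega)
    rw [h1e] at hu1 hu2
    obtain ⟨c2l, c2r⟩ := mem13 (hB 2 (x + 1) y (by norm_num) (by omega))
    rcases (by omega : P 2 (x + 1) y = 2 ∨ P 2 (x + 1) y = 3) with he | he
    · exact Or.inl ⟨x, y, by omega, he, h2⟩
    · obtain ⟨c1l, c1r⟩ := mem13 (hB 0 (x + 1) y (by norm_num) (by omega))
      rw [he] at hu3
      have hp0 : P 0 (x + 1) y = 2 := by omega
      cases y with
      | zero =>
          have hb := (hbd (n - x - 1) (by omega) (by omega)).2.2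
          have hl := h3 (n - x - 1) (by omega) (by omega)
          have e : n - (n - x - 1) = x + 1 := by omega
          rw [e] at hb
          omega
      | succ y' =>
          obtain ⟨hd1, hd2, hd3⟩ := hD (x + 1) y' (by omega)
          rw [hp0] at hd1 hd3
          obtain ⟨c3l, c3r⟩ := mem13 (hB 2 (x + 1) y' (by norm_num) (by omega))
          rcases (by omega : P 2 (x + 1) y' = 1 ∨ P 2 (x + 1) y' = 3) with hf | hf
          · exact Or.inr ⟨x, y', by omega, he, h2, hf⟩
          · obtain ⟨c4l, c4r⟩ := mem13 (hB 1 (x + 1 + 1) y' (by norm_num) (by omega))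
            rw [hf] at hd2
            have h1' : P 1 (x + 1 + 1) y' = 1 := by omega
            exact ih y' (by omega) (x + 1) (by omega) hf h1' hp0

private lemma C1_to_K (n : ℕ) (P : ℕ → ℕ → ℕ → ℕ) (hP : IsPuzzle123 n P)
    (a b : ℕ) (hab : a + b + 2 ≤ n) (e1 : P 2 a (b + 1) = 1) (e2 : P 2 a b = 3) :
    ∃ x y, x + y + 1 < n ∧ P 2 x y = 3 ∧ P 1 (x + 1) y = 1 ∧ P 0 x (y + 1) = 2 := by
  obtain ⟨hB, hU, hD⟩ := hP
  obtain ⟨hd1, hd2, hd3⟩ := hD a b (by omega)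
  rw [e2] at hd1 hd2
  obtain ⟨hu1, hu2, hu3⟩ := hU a (b + 1) (by omega)
  rw [e1] at hu1 hu3
  obtain ⟨b1, b2⟩ := mem13 (hB 0 a (b + 1) (by norm_num) (by omega))
  obtain ⟨b3, b4⟩ := mem13 (hB 1 (a + 1) b (by norm_num) (by omega))
  exact ⟨a, b, by omega, e2, by omega, by omega⟩

private lemma C2_to_K (n : ℕ) (P : ℕ → ℕ → ℕ → ℕ) (hP : IsPuzzle123 n P)
    (a b : ℕ) (hab : a + b + 3 ≤ n)
    (e1 : P 2 (a + 1) (b + 1) = 3) (e2 : P 2 a (b + 1) = 2) (e3 : P 2 (a + 1) b = 3) :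
    ∃ x y, x + y + 1 < n ∧ P 2 x y = 3 ∧ P 1 (x + 1) y = 1 ∧ P 0 x (y + 1) = 2 := by
  obtain ⟨hB, hU, hD⟩ := hP
  obtain ⟨hd1, hd2, hd3⟩ := hD (a + 1) b (by omega)
  rw [e3] at hd1 hd2
  obtain ⟨hu1, hu2, hu3⟩ := hU (a + 1) (b + 1) (by omega)
  rw [e1] at hu1 hu3
  obtain ⟨b1, b2⟩ := mem13 (hB 0 (a + 1) (b + 1) (by norm_num) (by omega))
  obtain ⟨b3, b4⟩ := mem13 (hB 1 (a + 1 + 1) b (by norm_num) (by omega))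
  obtain ⟨b5, b6⟩ := mem13 (hB 1 (a + 1) (b + 1) (by norm_num) (by omega))
  rcases (by omega : P 0 (a + 1) (b + 1) = 2 ∨ P 0 (a + 1) (b + 1) = 1) with hf | hf
  · exact ⟨a + 1, b, by omega, e3, by omega, hf⟩
  · rw [hf] at hu2
    have hp1 : P 1 (a + 1) (b + 1) = 2 := by omega
    obtain ⟨hd1', hd2', hd3'⟩ := hD a (b + 1) (by omega)
    rw [e2, hp1] at hd2'
    omega

private lemma D1_to_K (n : ℕ) (P : ℕ → ℕ → ℕ → ℕ) (hP : IsPuzzle123 n P)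
    (a b : ℕ) (hab : a + b + 2 ≤ n) (e1 : P 2 (a + 1) b = 2) (e2 : P 2 a b = 3) :
    ∃ x y, x + y + 1 < n ∧ P 2 x y = 3 ∧ P 1 (x + 1) y = 1 ∧ P 0 x (y + 1) = 2 := by
  obtain ⟨hB, hU, hD⟩ := hP
  obtain ⟨hd1, hd2, hd3⟩ := hD a b (by omega)
  rw [e2] at hd1 hd2
  obtain ⟨hu1, hu2, hu3⟩ := hU (a + 1) b (by omega)
  rw [e1] at hu1
  obtain ⟨b1, b2⟩ := mem13 (hB 0 a (b + 1) (by norm_num) (by omega))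
  obtain ⟨b3, b4⟩ := mem13 (hB 1 (a + 1) b (by norm_num) (by omega))
  have hp1 : P 1 (a + 1) b = 1 := by omega
  rw [hp1] at hd3
  exact ⟨a, b, by omega, e2, hp1, by omega⟩

private lemma D2_to_K (n : ℕ) (P : ℕ → ℕ → ℕ → ℕ) (hP : IsPuzzle123 n P)
    (a b : ℕ) (hab : a + b + 3 ≤ n)
    (e1 : P 2 (a + 1) (b + 1) = 3) (e2 : P 2 a (b + 1) = 3) (e3 : P 2 (a + 1) b = 1) :
    ∃ x y, x + y + 1 < n ∧ P 2 x y = 3 ∧ P 1 (x + 1) y = 1 ∧ P 0 x (y + 1) = 2 := by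
  obtain ⟨hB, hU, hD⟩ := hP
  obtain ⟨hd1, hd2, hd3⟩ := hD (a + 1) b (by omega)
  rw [e3] at hd1 hd2
  obtain ⟨hu1, hu2, hu3⟩ := hU (a + 1) (b + 1) (by omega)
  rw [e1] at hu1 hu3
  obtain ⟨b1, b2⟩ := mem13 (hB 0 (a + 1) (b + 1) (by norm_num) (by omega))
  obtain ⟨b5, b6⟩ := mem13 (hB 1 (a + 1) (b + 1) (by norm_num) (by omega))
  have hp0 : P 0 (a + 1) (b + 1) = 2 := by omega
  rw [hp0] at hu2
  have hp1 : P 1 (a + 1) (b + 1) = 1 := by omega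
  obtain ⟨hd1', hd2', hd3'⟩ := hD a (b + 1) (by omega)
  rw [e2] at hd1' hd2'
  rw [hp1] at hd3'
  obtain ⟨b7, b8⟩ := mem13 (hB 0 a (b + 1 + 1) (by norm_num) (by omega))
  exact ⟨a, b + 1, by omega, e2, hp1, by omega⟩

/-- Avoiding the downward `1/2/3` `K`-piece (left edge `3`, right edge `1`, top
edge `2`) is equivalent to the pattern avoidance conditions (c) and (d) in the middle
triangle `T^(2)` of `T = 𝒯(P)`. -/
theorem avoid_down_K_piece (n : ℕ) (hn : 1 ≤ n) (lam : ℕ → ℕ → ℕ)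
    (h1 : ∀ j, 1 ≤ j → j ≤ n → lam 1 j = 2 ∨ lam 1 j = 3)
    (h2 : ∀ j, 1 ≤ j → j ≤ n → lam 2 j ∈ Finset.Icc 1 3)
    (h3 : ∀ j, 1 ≤ j → j ≤ n → lam 3 j = 1 ∨ lam 3 j = 3)
    (P : ℕ → ℕ → ℕ → ℕ) (hP : IsPuzzle123 n P)
    (hbd : ∀ j, 1 ≤ j → j ≤ n →
        P 1 0 (j - 1) = lam 1 j ∧ P 2 (j - 1) (n - j) = lam 2 j ∧
        P 0 (n - j) 0 = lam 3 j) :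
    ((¬ ∃ x y, x + y + 1 < n ∧ P 2 x y = 3 ∧ P 1 (x + 1) y = 1 ∧ P 0 x (y + 1) = 2) ↔
      ((¬ ∃ j k, 2 ≤ k ∧ k ≤ n ∧ 1 ≤ j ∧ j ≤ k - 1 ∧
          TofP n P 2 j k = 1 ∧ TofP n P 2 j (k - 1) = 3) ∧
       (¬ ∃ j k, 2 ≤ k ∧ k ≤ n ∧ 2 ≤ j ∧ j ≤ k - 1 ∧
          TofP n P 2 j k = 3 ∧ TofP n P 2 (j - 1) (k - 1) = 2 ∧
          TofP n P 2 j (k - 1) = 3))) ∧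
    ((¬ ∃ x y, x + y + 1 < n ∧ P 2 x y = 3 ∧ P 1 (x + 1) y = 1 ∧ P 0 x (y + 1) = 2) ↔
      ((¬ ∃ j k, 2 ≤ k ∧ k ≤ n ∧ 2 ≤ j ∧ j ≤ k ∧
          TofP n P 2 j k = 2 ∧ TofP n P 2 (j - 1) (k - 1) = 3) ∧
       (¬ ∃ j k, 2 ≤ k ∧ k ≤ n ∧ 2 ≤ j ∧ j ≤ k - 1 ∧
          TofP n P 2 j k = 3 ∧ TofP n P 2 (j - 1) (k - 1) = 3 ∧
          TofP n P 2 j (k - 1) = 1))) := by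
  have hEC : (∃ x y, x + y + 1 < n ∧ P 2 x y = 3 ∧ P 1 (x + 1) y = 1 ∧ P 0 x (y + 1) = 2) ↔
      ((∃ a b, a + b + 2 ≤ n ∧ P 2 a (b + 1) = 1 ∧ P 2 a b = 3) ∨
       (∃ a b, a + b + 3 ≤ n ∧ P 2 (a + 1) (b + 1) = 3 ∧ P 2 a (b + 1) = 2 ∧
          P 2 (a + 1) b = 3)) := by
    constructor
    · rintro ⟨x, y, hxy, e2, e1, e0⟩
      exact K_to_C n P lam h1 hP hbd x y hxy e2 e1 e0
    · rintro (⟨a, b, h, f1, f2⟩ | ⟨a, b, h, f1, f2, f3⟩)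
      · exact C1_to_K n P hP a b h f1 f2
      · exact C2_to_K n P hP a b h f1 f2 f3
  have hED : (∃ x y, x + y + 1 < n ∧ P 2 x y = 3 ∧ P 1 (x + 1) y = 1 ∧ P 0 x (y + 1) = 2) ↔
      ((∃ a b, a + b + 2 ≤ n ∧ P 2 (a + 1) b = 2 ∧ P 2 a b = 3) ∨
       (∃ a b, a + b + 3 ≤ n ∧ P 2 (a + 1) (b + 1) = 3 ∧ P 2 a (b + 1) = 3 ∧
          P 2 (a + 1) b = 1)) := by
    constructor
    · rintro ⟨x, y, hxy, e2, e1, e0⟩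
      exact K_to_D n P lam h3 hP hbd y x hxy e2 e1 e0
    · rintro (⟨a, b, h, f1, f2⟩ | ⟨a, b, h, f1, f2, f3⟩)
      · exact D1_to_K n P hP a b h f1 f2
      · exact D2_to_K n P hP a b h f1 f2 f3
  have tA : (∃ j k, 2 ≤ k ∧ k ≤ n ∧ 1 ≤ j ∧ j ≤ k - 1 ∧
      TofP n P 2 j k = 1 ∧ TofP n P 2 j (k - 1) = 3) ↔
      (∃ a b, a + b + 2 ≤ n ∧ P 2 a (b + 1) = 1 ∧ P 2 a b = 3) := by
    constructor
    · rintro ⟨j, k, hk2, hkn, hj1, hjk, t1, t2⟩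
      rw [TofP2_eq n P j k hj1 (by omega) hkn] at t1
      rw [TofP2_eq n P j (k - 1) hj1 hjk (by omega)] at t2
      refine ⟨j - 1, k - 1 - j, by omega, ?_, ?_⟩
      · have e : k - j = k - 1 - j + 1 := by omega
        rw [← e]; exact t1
      · exact t2
    · rintro ⟨a, b, hab, f1, f2⟩
      refine ⟨a + 1, a + b + 2, by omega, by omega, by omega, by omega, ?_, ?_⟩
      · rw [TofP2_eq n P (a + 1) (a + b + 2) (by omega) (by omega) (by omega)]
        have e : a + 1 - 1 = a := by omega
        have e' : a + b + 2 - (a + 1) = b + 1 := by omega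
        rw [e, e']; exact f1
      · rw [TofP2_eq n P (a + 1) (a + b + 2 - 1) (by omega) (by omega) (by omega)]
        have e : a + 1 - 1 = a := by omega
        have e' : a + b + 2 - 1 - (a + 1) = b := by omega
        rw [e, e']; exact f2
  have tB : (∃ j k, 2 ≤ k ∧ k ≤ n ∧ 2 ≤ j ∧ j ≤ k - 1 ∧
      TofP n P 2 j k = 3 ∧ TofP n P 2 (j - 1) (k - 1) = 2 ∧ TofP n P 2 j (k - 1) = 3) ↔
      (∃ a b, a + b + 3 ≤ n ∧ P 2 (a + 1) (b + 1) = 3 ∧ P 2 a (b + 1) = 2 ∧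
        P 2 (a + 1) b = 3) := by
    constructor
    · rintro ⟨j, k, hk2, hkn, hj2, hjk, t1, t2, t3⟩
      rw [TofP2_eq n P j k (by omega) (by omega) hkn] at t1
      rw [TofP2_eq n P (j - 1) (k - 1) (by omega) (by omega) (by omega)] at t2
      rw [TofP2_eq n P j (k - 1) (by omega) hjk (by omega)] at t3
      refine ⟨j - 2, k - j - 1, by omega, ?_, ?_, ?_⟩
      · have e : j - 2 + 1 = j - 1 := by omega
        have e' : k - j - 1 + 1 = k - j := by omega
        rw [e, e']; exact t1
      · have e : j - 1 - 1 = j - 2 := by omega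
        have e' : k - 1 - (j - 1) = k - j - 1 + 1 := by omega
        rw [e, e'] at t2; exact t2
      · have e : j - 2 + 1 = j - 1 := by omega
        have e' : k - 1 - j = k - j - 1 := by omega
        rw [e]; rw [e'] at t3; exact t3
    · rintro ⟨a, b, hab, f1, f2, f3⟩
      refine ⟨a + 2, a + b + 3, by omega, by omega, by omega, by omega, ?_, ?_, ?_⟩
      · rw [TofP2_eq n P (a + 2) (a + b + 3) (by omega) (by omega) (by omega)]
        have e : a + 2 - 1 = a + 1 := by omega
        have e' : a + b + 3 - (a + 2) = b + 1 := by omega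
        rw [e, e']; exact f1
      · rw [TofP2_eq n P (a + 2 - 1) (a + b + 3 - 1) (by omega) (by omega) (by omega)]
        have e : a + 2 - 1 - 1 = a := by omega
        have e' : a + b + 3 - 1 - (a + 2 - 1) = b + 1 := by omega
        rw [e, e']; exact f2
      · rw [TofP2_eq n P (a + 2) (a + b + 3 - 1) (by omega) (by omega) (by omega)]
        have e : a + 2 - 1 = a + 1 := by omega
        have e' : a + b + 3 - 1 - (a + 2) = b := by omega
        rw [e, e']; exact f3
  have tA' : (∃ j k, 2 ≤ k ∧ k ≤ n ∧ 2 ≤ j ∧ j ≤ k ∧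
      TofP n P 2 j k = 2 ∧ TofP n P 2 (j - 1) (k - 1) = 3) ↔
      (∃ a b, a + b + 2 ≤ n ∧ P 2 (a + 1) b = 2 ∧ P 2 a b = 3) := by
    constructor
    · rintro ⟨j, k, hk2, hkn, hj2, hjk, t1, t2⟩
      rw [TofP2_eq n P j k (by omega) hjk hkn] at t1
      rw [TofP2_eq n P (j - 1) (k - 1) (by omega) (by omega) (by omega)] at t2
      refine ⟨j - 2, k - j, by omega, ?_, ?_⟩
      · have e : j - 2 + 1 = j - 1 := by omega
        rw [e]; exact t1
      · have e : j - 1 - 1 = j - 2 := by omega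
        have e' : k - 1 - (j - 1) = k - j := by omega
        rw [e, e'] at t2; exact t2
    · rintro ⟨a, b, hab, f1, f2⟩
      refine ⟨a + 2, a + b + 2, by omega, by omega, by omega, by omega, ?_, ?_⟩
      · rw [TofP2_eq n P (a + 2) (a + b + 2) (by omega) (by omega) (by omega)]
        have e : a + 2 - 1 = a + 1 := by omega
        have e' : a + b + 2 - (a + 2) = b := by omega
        rw [e, e']; exact f1
      · rw [TofP2_eq n P (a + 2 - 1) (a + b + 2 - 1) (by omega) (by omega) (by omega)]
        have e : a + 2 - 1 - 1 = a := by omega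
        have e' : a + b + 2 - 1 - (a + 2 - 1) = b := by omega
        rw [e, e']; exact f2
  have tB' : (∃ j k, 2 ≤ k ∧ k ≤ n ∧ 2 ≤ j ∧ j ≤ k - 1 ∧
      TofP n P 2 j k = 3 ∧ TofP n P 2 (j - 1) (k - 1) = 3 ∧ TofP n P 2 j (k - 1) = 1) ↔
      (∃ a b, a + b + 3 ≤ n ∧ P 2 (a + 1) (b + 1) = 3 ∧ P 2 a (b + 1) = 3 ∧
        P 2 (a + 1) b = 1) := by
    constructor
    · rintro ⟨j, k, hk2, hkn, hj2, hjk, t1, t2, t3⟩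
      rw [TofP2_eq n P j k (by omega) (by omega) hkn] at t1
      rw [TofP2_eq n P (j - 1) (k - 1) (by omega) (by omega) (by omega)] at t2
      rw [TofP2_eq n P j (k - 1) (by omega) hjk (by omega)] at t3
      refine ⟨j - 2, k - j - 1, by omega, ?_, ?_, ?_⟩
      · have e : j - 2 + 1 = j - 1 := by omega
        have e' : k - j - 1 + 1 = k - j := by omega
        rw [e, e']; exact t1
      · have e : j - 1 - 1 = j - 2 := by omega
        have e' : k - 1 - (j - 1) = k - j - 1 + 1 := by omega
        rw [e, e'] at t2; exact t2
      · have e : j - 2 + 1 = j - 1 := by omega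
        have e' : k - 1 - j = k - j - 1 := by omega
        rw [e]; rw [e'] at t3; exact t3
    · rintro ⟨a, b, hab, f1, f2, f3⟩
      refine ⟨a + 2, a + b + 3, by omega, by omega, by omega, by omega, ?_, ?_, ?_⟩
      · rw [TofP2_eq n P (a + 2) (a + b + 3) (by omega) (by omega) (by omega)]
        have e : a + 2 - 1 = a + 1 := by omega
        have e' : a + b + 3 - (a + 2) = b + 1 := by omega
        rw [e, e']; exact f1
      · rw [TofP2_eq n P (a + 2 - 1) (a + b + 3 - 1) (by omega) (by omega) (by omega)]
        have e : a + 2 - 1 - 1 = a := by omega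
        have e' : a + b + 3 - 1 - (a + 2 - 1) = b + 1 := by omega
        rw [e, e']; exact f2
      · rw [TofP2_eq n P (a + 2) (a + b + 3 - 1) (by omega) (by omega) (by omega)]
        have e : a + 2 - 1 = a + 1 := by omega
        have e' : a + b + 3 - 1 - (a + 2) = b := by omega
        rw [e, e']; exact f3
  constructor
  · rw [hEC, tA, tB, not_or]
  · rw [hED, tA', tB', not_or]
end

section
/- For every n ≥ 1 and every string λ ∈ {1,2}^n, there is exactly one interlacing triangular array T of rank 2 and height n such that the top row of T^{(1)} equals λ; moreover this unique array satisfies T^{(2)} = (T^{(1)})†, where (T^{(1)})† is obtained from T^{(1)} by reversing each row and exchanging the letters 1 and 2. -/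
/-- Twice the horizontal coordinate `h(i,j,k) = i*n + j - (n+k)/2` of an entry
`T^(i)_(j,k)` of a triangular array of height `n` (doubled to stay in `ℤ`). -/
def Hc (n i j k : ℕ) : ℤ :=
  2 * ((i : ℤ) * (n : ℤ) + (j : ℤ)) - ((n : ℤ) + (k : ℤ))

/-- `T` is an interlacing triangular array of rank `m` and height `n`:
entries `T i j k ∈ {1,…,m}` for `1 ≤ i ≤ m`, `1 ≤ j ≤ k ≤ n`;
(a) each value `a ∈ {1,…,m}` occurs exactly `k` times in row `k`;
(b) any two equal entries of row `k` have an interlacing equal entry in row `k-1`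
strictly between them in horizontal coordinate. -/
def IsITA (m n : ℕ) (T : ℕ → ℕ → ℕ → ℕ) : Prop :=
  (∀ i j k, 1 ≤ i → i ≤ m → 1 ≤ j → j ≤ k → k ≤ n → T i j k ∈ Finset.Icc 1 m) ∧
  (∀ k, 1 ≤ k → k ≤ n → ∀ a ∈ Finset.Icc 1 m,
      ((Finset.Icc 1 m ×ˢ Finset.Icc 1 k).filter (fun p => T p.1 p.2 k = a)).card = k) ∧
  (∀ k, 1 ≤ k → k ≤ n → ∀ i j i' j',
      1 ≤ i → i ≤ m → 1 ≤ j → j ≤ k → 1 ≤ i' → i' ≤ m → 1 ≤ j' → j' ≤ k →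
      T i j k = T i' j' k → Hc n i j k < Hc n i' j' k →
      ∃ i'' j'', 1 ≤ i'' ∧ i'' ≤ m ∧ 1 ≤ j'' ∧ j'' ≤ k - 1 ∧
        T i'' j'' (k - 1) = T i j k ∧
        Hc n i j k < Hc n i'' j'' (k - 1) ∧ Hc n i'' j'' (k - 1) < Hc n i' j' k)

/-- The set of interlacing triangular arrays of rank `m` and height `n`,
normalized to be `0` outside the support `1 ≤ i ≤ m`, `1 ≤ j ≤ k ≤ n`. -/
def ITAFull (m n : ℕ) : Set (ℕ → ℕ → ℕ → ℕ) :=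
  {T | IsITA m n T ∧ ∀ i j k, ¬(1 ≤ i ∧ i ≤ m ∧ 1 ≤ j ∧ j ≤ k ∧ k ≤ n) → T i j k = 0}

/-- The letter swap `1 ↔ 2`. -/
def swap12 (v : ℕ) : ℕ := if v = 1 then 2 else if v = 2 then 1 else v


/-- Between any two elements of `S` there is an element of `S'`; then prefix counts
of `S` exceed those of `S'` by at most 1. -/
theorem gapL (S S' : Finset ℤ)
    (H : ∀ p ∈ S, ∀ q ∈ S, p < q → ∃ r ∈ S', p < r ∧ r < q) (z : ℤ) :
    (S.filter (fun x => x ≤ z)).card ≤ (S'.filter (fun x => x ≤ z)).card + 1 := by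
  set Sz := S.filter (fun x => x ≤ z) with hSz
  rcases Sz.eq_empty_or_nonempty with he | hne
  · simp [he]
  set M := Sz.max' hne with hM
  have hMS : M ∈ Sz := Sz.max'_mem hne
  -- for p ∈ Sz.erase M, the set of elements above p is nonempty
  have key : ∀ p ∈ Sz.erase M, ∃ r ∈ S'.filter (fun x => x ≤ z),
      p < r ∧ ∀ q ∈ Sz, p < q → r < q := by
    intro p hp
    have hpS : p ∈ Sz := Finset.mem_of_mem_erase hp
    have hpne : p ≠ M := Finset.ne_of_mem_erase hp
    have hplt : p < M := lt_of_le_of_ne (Sz.le_max' p hpS) hpne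
    have hnonempty : (Sz.filter (fun q => p < q)).Nonempty :=
      ⟨M, Finset.mem_filter.2 ⟨hMS, hplt⟩⟩
    set q0 := (Sz.filter (fun q => p < q)).min' hnonempty with hq0
    have hq0mem := (Sz.filter (fun q => p < q)).min'_mem hnonempty
    rw [Finset.mem_filter] at hq0mem
    have hpS' : p ∈ S := (Finset.mem_filter.1 hpS).1
    have hq0S : q0 ∈ S := (Finset.mem_filter.1 hq0mem.1).1
    obtain ⟨r, hrS', hpr, hrq0⟩ := H p hpS' q0 hq0S hq0mem.2
    refine ⟨r, Finset.mem_filter.2 ⟨hrS', ?_⟩, hpr, ?_⟩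
    · exact le_trans hrq0.le (Finset.mem_filter.1 hq0mem.1).2
    · intro q hq hpq
      exact lt_of_lt_of_le hrq0 (Finset.min'_le _ q (Finset.mem_filter.2 ⟨hq, hpq⟩))
  choose f hf1 hf2 hf3 using key
  have hinj : Set.InjOn (fun p => if hp : p ∈ Sz.erase M then f p hp else 0)
      (Sz.erase M) := by
    intro p1 h1' p2 h2' heq
    have h1 : p1 ∈ Sz.erase M := h1'
    have h2 : p2 ∈ Sz.erase M := h2'
    simp only [h1, h2, dif_pos] at heq
    by_contra hne'
    rcases lt_or_gt_of_ne hne' with hlt | hlt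
    · have := hf3 p1 h1 p2 (Finset.mem_of_mem_erase h2) hlt
      have := hf2 p2 h2
      omega
    · have := hf3 p2 h2 p1 (Finset.mem_of_mem_erase h1) hlt
      have := hf2 p1 h1
      omega
  have hmaps : ∀ p ∈ Sz.erase M,
      (if hp : p ∈ Sz.erase M then f p hp else 0) ∈ S'.filter (fun x => x ≤ z) := by
    intro p hp
    simp only [hp, dif_pos]
    exact hf1 p hp
  have hcard := Finset.card_le_card_of_injOn _ hmaps hinj
  have : (Sz.erase M).card = Sz.card - 1 := Finset.card_erase_of_mem hMS
  have hpos : 1 ≤ Sz.card := Finset.card_pos.2 hne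
  omega


theorem gapR (S S' : Finset ℤ)
    (H : ∀ p ∈ S, ∀ q ∈ S, p < q → ∃ r ∈ S', p < r ∧ r < q) (z : ℤ) :
    (S.filter (fun x => z ≤ x)).card ≤ (S'.filter (fun x => z ≤ x)).card + 1 := by
  set Sz := S.filter (fun x => z ≤ x) with hSz
  rcases Sz.eq_empty_or_nonempty with he | hne
  · simp [he]
  set M := Sz.min' hne with hM
  have hMS : M ∈ Sz := Sz.min'_mem hne
  have key : ∀ p ∈ Sz.erase M, ∃ r ∈ S'.filter (fun x => z ≤ x),
      r < p ∧ ∀ q ∈ Sz, q < p → q < r := by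
    intro p hp
    have hpS : p ∈ Sz := Finset.mem_of_mem_erase hp
    have hpne : p ≠ M := Finset.ne_of_mem_erase hp
    have hplt : M < p := lt_of_le_of_ne (Sz.min'_le p hpS) (Ne.symm hpne)
    have hnonempty : (Sz.filter (fun x => x < p)).Nonempty :=
      ⟨M, Finset.mem_filter.2 ⟨hMS, hplt⟩⟩
    set q0 := (Sz.filter (fun x => x < p)).max' hnonempty with hq0
    have hq0mem := (Sz.filter (fun x => x < p)).max'_mem hnonempty
    rw [Finset.mem_filter] at hq0mem
    have hpS' : p ∈ S := (Finset.mem_filter.1 hpS).1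
    have hq0S : q0 ∈ S := (Finset.mem_filter.1 hq0mem.1).1
    obtain ⟨r, hrS', hq0r, hrp⟩ := H q0 hq0S p hpS' hq0mem.2
    refine ⟨r, Finset.mem_filter.2 ⟨hrS', ?_⟩, hrp, ?_⟩
    · exact le_trans (Finset.mem_filter.1 hq0mem.1).2 hq0r.le
    · intro q hq hqp
      exact lt_of_le_of_lt ((Sz.filter (fun x => x < p)).le_max' q (Finset.mem_filter.2 ⟨hq, hqp⟩)) hq0r
  choose f hf1 hf2 hf3 using key
  have hinj : Set.InjOn (fun p => if hp : p ∈ Sz.erase M then f p hp else 0)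
      (Sz.erase M) := by
    intro p1 h1' p2 h2' heq
    have h1 : p1 ∈ Sz.erase M := h1'
    have h2 : p2 ∈ Sz.erase M := h2'
    simp only [h1, h2, dif_pos] at heq
    by_contra hne'
    rcases lt_or_gt_of_ne hne' with hlt | hlt
    · have := hf3 p2 h2 p1 (Finset.mem_of_mem_erase h1) hlt
      have := hf2 p1 h1
      omega
    · have := hf3 p1 h1 p2 (Finset.mem_of_mem_erase h2) hlt
      have := hf2 p2 h2
      omega
  have hmaps : ∀ p ∈ Sz.erase M,
      (if hp : p ∈ Sz.erase M then f p hp else 0) ∈ S'.filter (fun x => z ≤ x) := by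
    intro p hp
    simp only [hp, dif_pos]
    exact hf1 p hp
  have hcard := Finset.card_le_card_of_injOn _ hmaps hinj
  have : (Sz.erase M).card = Sz.card - 1 := Finset.card_erase_of_mem hMS
  have hpos : 1 ≤ Sz.card := Finset.card_pos.2 hne
  omega




/-- index set of entries with value `a` in row `r`. -/
def rowF (T : ℕ → ℕ → ℕ → ℕ) (r a : ℕ) : Finset (ℕ × ℕ) :=
  (Finset.Icc 1 2 ×ˢ Finset.Icc 1 r).filter (fun p => T p.1 p.2 r = a)

/-- positions of entries with value `a` in row `r`. -/
def rowPos (n : ℕ) (T : ℕ → ℕ → ℕ → ℕ) (r a : ℕ) : Finset ℤ :=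
  (rowF T r a).image (fun p => Hc n p.1 p.2 r)

lemma Hc_injOn (n r : ℕ) (hr : r ≤ n) :
    Set.InjOn (fun p : ℕ × ℕ => Hc n p.1 p.2 r)
      ((Finset.Icc 1 2 ×ˢ Finset.Icc 1 r) : Finset (ℕ × ℕ)) := by
  intro p hp q hq h
  simp only [Finset.coe_product, Set.mem_prod, Finset.mem_coe, Finset.mem_Icc] at hp hq
  simp only [Hc] at h
  obtain ⟨⟨hp1, hp2⟩, hp3, hp4⟩ := hp
  obtain ⟨⟨hq1, hq2⟩, hq3, hq4⟩ := hq
  have : p.1 * n + p.2 = q.1 * n + q.2 := by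
    have := h
    push_cast at this ⊢
    omega
  have hp2' : p.2 ≤ n := le_trans hp4 hr
  have hq2' : q.2 ≤ n := le_trans hq4 hr
  have : p.1 = q.1 ∧ p.2 = q.2 := by
    interval_cases h1 : p.1 <;> interval_cases h2 : q.1 <;> omega
  exact Prod.ext this.1 this.2

lemma rowPos_filter_card (n r : ℕ) (hr : r ≤ n) (T : ℕ → ℕ → ℕ → ℕ) (a : ℕ)
    (P : ℤ → Prop) [DecidablePred P] :
    ((rowPos n T r a).filter P).card
      = ((Finset.Icc 1 2 ×ˢ Finset.Icc 1 r).filter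
          (fun p => T p.1 p.2 r = a ∧ P (Hc n p.1 p.2 r))).card := by
  rw [rowPos, Finset.filter_image]
  rw [Finset.card_image_of_injOn ((Hc_injOn n r hr).mono (by
    intro p hp
    simp only [rowF, Finset.coe_filter, Set.mem_setOf_eq, Finset.mem_coe] at hp ⊢
    exact (Finset.mem_filter.1 hp.1).1))]
  rw [rowF, Finset.filter_filter]

lemma rowPos_card (n r : ℕ) (hr : r ≤ n) (T : ℕ → ℕ → ℕ → ℕ) (a : ℕ)
    (hcard : ((Finset.Icc 1 2 ×ˢ Finset.Icc 1 r).filter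
        (fun p => T p.1 p.2 r = a)).card = r) :
    (rowPos n T r a).card = r := by
  rw [rowPos, Finset.card_image_of_injOn ((Hc_injOn n r hr).mono (by
    intro p hp
    exact Finset.mem_coe.2 (Finset.mem_filter.1 (Finset.mem_coe.1 hp)).1))]
  exact hcard

lemma two_filter (s : Finset ℕ) (f : ℕ → ℕ) (hf : ∀ t ∈ s, f t = 1 ∨ f t = 2) :
    (s.filter (fun t => f t = 1)).card + (s.filter (fun t => f t = 2)).card = s.card := by
  have : s.filter (fun t => f t = 2) = s.filter (fun t => ¬ f t = 1) := by
    apply Finset.filter_congr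
    intro t ht
    rcases hf t ht with h | h <;> simp [h]
  rw [this, Finset.card_filter_add_card_filter_not]

lemma zsplit (S : Finset ℤ) (z : ℤ) :
    (S.filter (fun x => x ≤ z)).card + (S.filter (fun x => z + 1 ≤ x)).card = S.card := by
  have : S.filter (fun x => z + 1 ≤ x) = S.filter (fun x => ¬ x ≤ z) := by
    apply Finset.filter_congr; intro t ht; constructor <;> intro h <;> omega
  rw [this, Finset.card_filter_add_card_filter_not]

lemma count_succ (f : ℕ → ℕ) (j : ℕ) (hj : 1 ≤ j) (a : ℕ) :
    ((Finset.Icc 1 j).filter (fun t => f t = a)).card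
      = ((Finset.Icc 1 (j - 1)).filter (fun t => f t = a)).card
        + (if f j = a then 1 else 0) := by
  have h1 : Finset.Icc 1 j = insert j (Finset.Icc 1 (j - 1)) := by
    ext t; simp only [Finset.mem_Icc, Finset.mem_insert]; omega
  rw [h1, Finset.filter_insert]
  split
  · rw [Finset.card_insert_of_notMem (by simp only [Finset.mem_filter, Finset.mem_Icc]; omega)]
  · simp

lemma count_low (f : ℕ → ℕ) (j m : ℕ) (hj : 1 ≤ j) (hjm : j ≤ m) (a : ℕ) :
    ((Finset.Icc j m).filter (fun t => f t = a)).card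
      = ((Finset.Icc (j + 1) m).filter (fun t => f t = a)).card
        + (if f j = a then 1 else 0) := by
  have h1 : Finset.Icc j m = insert j (Finset.Icc (j + 1) m) := by
    ext t; simp only [Finset.mem_Icc, Finset.mem_insert]; omega
  rw [h1, Finset.filter_insert]
  split
  · rw [Finset.card_insert_of_notMem (by simp only [Finset.mem_filter, Finset.mem_Icc]; omega)]
  · simp



lemma filter_row1 (n r j : ℕ) (T : ℕ → ℕ → ℕ → ℕ) (a : ℕ) (z : ℤ) (hj : j ≤ r)
    (hz : ∀ t, 1 ≤ t → t ≤ r → (Hc n 1 t r ≤ z ↔ t ≤ j))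
    (hz2 : ∀ t, 1 ≤ t → t ≤ r → ¬ (Hc n 2 t r ≤ z)) :
    ((Finset.Icc 1 2 ×ˢ Finset.Icc 1 r).filter
        (fun p => T p.1 p.2 r = a ∧ Hc n p.1 p.2 r ≤ z)).card
      = ((Finset.Icc 1 j).filter (fun t => T 1 t r = a)).card := by
  apply Finset.card_bij (fun p _ => p.2)
  · intro p hp
    simp only [Finset.mem_filter, Finset.mem_product, Finset.mem_Icc] at hp
    obtain ⟨⟨⟨h1, h2⟩, h3, h4⟩, h5, h6⟩ := hp
    have hp1 : p.1 = 1 := by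
      by_contra hne
      have : p.1 = 2 := by omega
      exact hz2 p.2 h3 h4 (this ▸ h6)
    simp only [Finset.mem_filter, Finset.mem_Icc]
    rw [hp1] at h5 h6
    exact ⟨⟨h3, (hz p.2 h3 h4).1 h6⟩, h5⟩
  · intro p hp q hq hpq
    simp only [Finset.mem_filter, Finset.mem_product, Finset.mem_Icc] at hp hq
    obtain ⟨⟨⟨h1, h2⟩, h3, h4⟩, h5, h6⟩ := hp
    obtain ⟨⟨⟨g1, g2⟩, g3, g4⟩, g5, g6⟩ := hq
    have hp1 : p.1 = 1 := by
      by_contra hne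
      have : p.1 = 2 := by omega
      exact hz2 p.2 h3 h4 (this ▸ h6)
    have hq1 : q.1 = 1 := by
      by_contra hne
      have : q.1 = 2 := by omega
      exact hz2 q.2 g3 g4 (this ▸ g6)
    exact Prod.ext (hp1.trans hq1.symm) hpq
  · intro t ht
    simp only [Finset.mem_filter, Finset.mem_Icc] at ht
    obtain ⟨⟨h1, h2⟩, h3⟩ := ht
    refine ⟨(1, t), ?_, rfl⟩
    simp only [Finset.mem_filter, Finset.mem_product, Finset.mem_Icc]
    exact ⟨⟨⟨le_refl 1, by omega⟩, h1, le_trans h2 hj⟩, h3,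
      (hz t h1 (le_trans h2 hj)).2 h2⟩

lemma filter_row2 (n r j : ℕ) (T : ℕ → ℕ → ℕ → ℕ) (a : ℕ) (z : ℤ) (hj : 1 ≤ j)
    (hz : ∀ t, 1 ≤ t → t ≤ r → (z ≤ Hc n 2 t r ↔ j ≤ t))
    (hz2 : ∀ t, 1 ≤ t → t ≤ r → ¬ (z ≤ Hc n 1 t r)) :
    ((Finset.Icc 1 2 ×ˢ Finset.Icc 1 r).filter
        (fun p => T p.1 p.2 r = a ∧ z ≤ Hc n p.1 p.2 r)).card
      = ((Finset.Icc j r).filter (fun t => T 2 t r = a)).card := by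
  apply Finset.card_bij (fun p _ => p.2)
  · intro p hp
    simp only [Finset.mem_filter, Finset.mem_product, Finset.mem_Icc] at hp
    obtain ⟨⟨⟨h1, h2⟩, h3, h4⟩, h5, h6⟩ := hp
    have hp1 : p.1 = 2 := by
      by_contra hne
      have : p.1 = 1 := by omega
      exact hz2 p.2 h3 h4 (this ▸ h6)
    simp only [Finset.mem_filter, Finset.mem_Icc]
    rw [hp1] at h5 h6
    exact ⟨⟨(hz p.2 h3 h4).1 h6, h4⟩, h5⟩
  · intro p hp q hq hpq
    simp only [Finset.mem_filter, Finset.mem_product, Finset.mem_Icc] at hp hq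
    obtain ⟨⟨⟨h1, h2⟩, h3, h4⟩, h5, h6⟩ := hp
    obtain ⟨⟨⟨g1, g2⟩, g3, g4⟩, g5, g6⟩ := hq
    have hp1 : p.1 = 2 := by
      by_contra hne
      have : p.1 = 1 := by omega
      exact hz2 p.2 h3 h4 (this ▸ h6)
    have hq1 : q.1 = 2 := by
      by_contra hne
      have : q.1 = 1 := by omega
      exact hz2 q.2 g3 g4 (this ▸ g6)
    exact Prod.ext (hp1.trans hq1.symm) hpq
  · intro t ht
    simp only [Finset.mem_filter, Finset.mem_Icc] at ht
    obtain ⟨⟨h1, h2⟩, h3⟩ := ht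
    have ht1 : 1 ≤ t := le_trans hj h1
    refine ⟨(2, t), ?_, rfl⟩
    simp only [Finset.mem_filter, Finset.mem_product, Finset.mem_Icc]
    exact ⟨⟨⟨by omega, le_refl 2⟩, ht1, h2⟩, h3, (hz t ht1 h2).2 h1⟩


lemma prefix_counts (n l k : ℕ) (T : ℕ → ℕ → ℕ → ℕ) (hlk : k = l + 1)
    (hl : 1 ≤ l) (hkn : k ≤ n)
    (hent : ∀ i j r, 1 ≤ i → i ≤ 2 → 1 ≤ j → j ≤ r → r ≤ n → T i j r = 1 ∨ T i j r = 2)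
    (hcard : ∀ r, 1 ≤ r → r ≤ n → ∀ a, a = 1 ∨ a = 2 →
      ((Finset.Icc 1 2 ×ˢ Finset.Icc 1 r).filter (fun p => T p.1 p.2 r = a)).card = r)
    (hGap : ∀ a, ∀ p ∈ rowPos n T k a, ∀ q ∈ rowPos n T k a, p < q →
      ∃ r' ∈ rowPos n T l a, p < r' ∧ r' < q)
    (j : ℕ) (hj : j ≤ l) (a : ℕ) (ha : a = 1 ∨ a = 2) :
    ((Finset.Icc 1 j).filter (fun t => T 1 t l = a)).card
      = ((Finset.Icc 1 j).filter (fun t => T 1 t k = a)).card := by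
  have hln : l ≤ n := by omega
  set z : ℤ := Hc n 1 j l with hzdef
  -- identification of position prefix counts with index prefix counts
  have idk : ∀ b : ℕ, ((rowPos n T k b).filter (fun x => x ≤ z)).card
      = ((Finset.Icc 1 j).filter (fun t => T 1 t k = b)).card := by
    intro b
    rw [rowPos_filter_card n k hkn T b (fun x => x ≤ z)]
    apply filter_row1 n k j T b z (by omega)
    · intro t ht1 ht2
      simp only [hzdef, Hc]
      push_cast
      omega
    · intro t ht1 ht2
      simp only [hzdef, Hc]
      push_cast
      omega
  have idl : ∀ b : ℕ, ((rowPos n T l b).filter (fun x => x ≤ z)).card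
      = ((Finset.Icc 1 j).filter (fun t => T 1 t l = b)).card := by
    intro b
    rw [rowPos_filter_card n l hln T b (fun x => x ≤ z)]
    apply filter_row1 n l j T b z hj
    · intro t ht1 ht2
      simp only [hzdef, Hc]
      push_cast
      omega
    · intro t ht1 ht2
      simp only [hzdef, Hc]
      push_cast
      omega
  -- one-sided inequality from gapR
  have hineq : ∀ b, b = 1 ∨ b = 2 →
      ((Finset.Icc 1 j).filter (fun t => T 1 t l = b)).card
        ≤ ((Finset.Icc 1 j).filter (fun t => T 1 t k = b)).card := by
    intro b hb
    have hck : (rowPos n T k b).card = k := rowPos_card n k hkn T b (hcard k (by omega) hkn b hb)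
    have hcl : (rowPos n T l b).card = l := rowPos_card n l hln T b (hcard l hl hln b hb)
    have hsk := zsplit (rowPos n T k b) z
    have hsl := zsplit (rowPos n T l b) z
    have hgr := gapR (rowPos n T k b) (rowPos n T l b) (hGap b) (z + 1)
    rw [idk b] at hsk
    rw [idl b] at hsl
    omega
  -- totals
  have htotk : ((Finset.Icc 1 j).filter (fun t => T 1 t k = 1)).card
      + ((Finset.Icc 1 j).filter (fun t => T 1 t k = 2)).card = j := by
    rw [two_filter _ _ (fun t ht => by
      simp only [Finset.mem_Icc] at ht
      exact hent 1 t k (by omega) (by omega) ht.1 (by omega) hkn)]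
    simp
  have htotl : ((Finset.Icc 1 j).filter (fun t => T 1 t l = 1)).card
      + ((Finset.Icc 1 j).filter (fun t => T 1 t l = 2)).card = j := by
    rw [two_filter _ _ (fun t ht => by
      simp only [Finset.mem_Icc] at ht
      exact hent 1 t l (by omega) (by omega) ht.1 (by omega) hln)]
    simp
  have h1 := hineq 1 (Or.inl rfl)
  have h2 := hineq 2 (Or.inr rfl)
  rcases ha with rfl | rfl <;> omega


lemma suffix_counts (n l k : ℕ) (T : ℕ → ℕ → ℕ → ℕ) (hlk : k = l + 1)
    (hl : 1 ≤ l) (hkn : k ≤ n)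
    (hent : ∀ i j r, 1 ≤ i → i ≤ 2 → 1 ≤ j → j ≤ r → r ≤ n → T i j r = 1 ∨ T i j r = 2)
    (hcard : ∀ r, 1 ≤ r → r ≤ n → ∀ a, a = 1 ∨ a = 2 →
      ((Finset.Icc 1 2 ×ˢ Finset.Icc 1 r).filter (fun p => T p.1 p.2 r = a)).card = r)
    (hGap : ∀ a, ∀ p ∈ rowPos n T k a, ∀ q ∈ rowPos n T k a, p < q →
      ∃ r' ∈ rowPos n T l a, p < r' ∧ r' < q)
    (j : ℕ) (hj1 : 1 ≤ j) (hj : j ≤ k) (a : ℕ) (ha : a = 1 ∨ a = 2) :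
    ((Finset.Icc j l).filter (fun t => T 2 t l = a)).card
      = ((Finset.Icc (j + 1) k).filter (fun t => T 2 t k = a)).card := by
  have hln : l ≤ n := by omega
  rcases eq_or_lt_of_le hj with rfl | hjl
  · rw [Finset.Icc_eq_empty (by omega), Finset.Icc_eq_empty (by omega)]
    simp
  have hjl : j ≤ l := by omega
  set z : ℤ := Hc n 2 j l with hzdef
  have idk : ∀ b : ℕ, ((rowPos n T k b).filter (fun x => z ≤ x)).card
      = ((Finset.Icc (j + 1) k).filter (fun t => T 2 t k = b)).card := by
    intro b
    rw [rowPos_filter_card n k hkn T b (fun x => z ≤ x)]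
    apply filter_row2 n k (j + 1) T b z (by omega)
    · intro t ht1 ht2
      simp only [hzdef, Hc]
      push_cast
      omega
    · intro t ht1 ht2
      simp only [hzdef, Hc]
      push_cast
      omega
  have idl : ∀ b : ℕ, ((rowPos n T l b).filter (fun x => z ≤ x)).card
      = ((Finset.Icc j l).filter (fun t => T 2 t l = b)).card := by
    intro b
    rw [rowPos_filter_card n l hln T b (fun x => z ≤ x)]
    apply filter_row2 n l j T b z hj1
    · intro t ht1 ht2
      simp only [hzdef, Hc]
      push_cast
      omega
    · intro t ht1 ht2
      simp only [hzdef, Hc]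
      push_cast
      omega
  have hineq : ∀ b, b = 1 ∨ b = 2 →
      ((Finset.Icc j l).filter (fun t => T 2 t l = b)).card
        ≤ ((Finset.Icc (j + 1) k).filter (fun t => T 2 t k = b)).card := by
    intro b hb
    have hck : (rowPos n T k b).card = k := rowPos_card n k hkn T b (hcard k (by omega) hkn b hb)
    have hcl : (rowPos n T l b).card = l := rowPos_card n l hln T b (hcard l hl hln b hb)
    have hsk := zsplit (rowPos n T k b) (z - 1)
    have hsl := zsplit (rowPos n T l b) (z - 1)
    have hgl := gapL (rowPos n T k b) (rowPos n T l b) (hGap b) (z - 1)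
    have hzz : z - 1 + 1 = z := by ring
    rw [hzz] at hsk hsl
    rw [idk b] at hsk
    rw [idl b] at hsl
    omega
  have htotk : ((Finset.Icc (j + 1) k).filter (fun t => T 2 t k = 1)).card
      + ((Finset.Icc (j + 1) k).filter (fun t => T 2 t k = 2)).card = k - j := by
    rw [two_filter _ _ (fun t ht => by
      simp only [Finset.mem_Icc] at ht
      exact hent 2 t k (by omega) (by omega) (by omega) ht.2 hkn)]
    rw [Nat.card_Icc]
    omega
  have htotl : ((Finset.Icc j l).filter (fun t => T 2 t l = 1)).card
      + ((Finset.Icc j l).filter (fun t => T 2 t l = 2)).card = k - j := by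
    rw [two_filter _ _ (fun t ht => by
      simp only [Finset.mem_Icc] at ht
      exact hent 2 t l (by omega) (by omega) (by omega) ht.2 hln)]
    rw [Nat.card_Icc]
    omega
  have h1 := hineq 1 (Or.inl rfl)
  have h2 := hineq 2 (Or.inr rfl)
  rcases ha with rfl | rfl <;> omega


lemma gap_of_ITA (n l k : ℕ) (T : ℕ → ℕ → ℕ → ℕ) (hlk : k = l + 1) (hl : 1 ≤ l)
    (hkn : k ≤ n)
    (hb : ∀ i j i' j', 1 ≤ i → i ≤ 2 → 1 ≤ j → j ≤ k → 1 ≤ i' → i' ≤ 2 → 1 ≤ j' → j' ≤ k →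
      T i j k = T i' j' k → Hc n i j k < Hc n i' j' k →
      ∃ i'' j'', 1 ≤ i'' ∧ i'' ≤ 2 ∧ 1 ≤ j'' ∧ j'' ≤ k - 1 ∧
        T i'' j'' (k - 1) = T i j k ∧
        Hc n i j k < Hc n i'' j'' (k - 1) ∧ Hc n i'' j'' (k - 1) < Hc n i' j' k) :
    ∀ a, ∀ p ∈ rowPos n T k a, ∀ q ∈ rowPos n T k a, p < q →
      ∃ r' ∈ rowPos n T l a, p < r' ∧ r' < q := by
  intro a p hp q hq hpq
  simp only [rowPos, rowF, Finset.mem_image, Finset.mem_filter, Finset.mem_product,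
    Finset.mem_Icc] at hp hq
  obtain ⟨⟨i, j⟩, ⟨⟨⟨hi1, hi2⟩, hj1, hj2⟩, hTa⟩, hpos⟩ := hp
  obtain ⟨⟨i', j'⟩, ⟨⟨⟨hi1', hi2'⟩, hj1', hj2'⟩, hTa'⟩, hpos'⟩ := hq
  have hlt : Hc n i j k < Hc n i' j' k := by rw [hpos, hpos']; exact hpq
  obtain ⟨i'', j'', h1, h2, h3, h4, h5, h6, h7⟩ :=
    hb i j i' j' hi1 hi2 hj1 hj2 hi1' hi2' hj1' hj2' (hTa.trans hTa'.symm) hlt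
  have hkl : k - 1 = l := by omega
  rw [hkl] at h4 h5 h6 h7
  refine ⟨Hc n i'' j'' l, ?_, ?_, ?_⟩
  · simp only [rowPos, rowF, Finset.mem_image, Finset.mem_filter, Finset.mem_product,
      Finset.mem_Icc]
    exact ⟨(i'', j''), ⟨⟨⟨h1, h2⟩, h3, h4⟩, h5.trans hTa⟩, rfl⟩
  · rw [← hpos]; exact h6
  · rw [← hpos']; exact h7

lemma truncation (n l k : ℕ) (T : ℕ → ℕ → ℕ → ℕ) (hlk : k = l + 1)
    (hl : 1 ≤ l) (hkn : k ≤ n)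
    (hent : ∀ i j r, 1 ≤ i → i ≤ 2 → 1 ≤ j → j ≤ r → r ≤ n → T i j r = 1 ∨ T i j r = 2)
    (hcard : ∀ r, 1 ≤ r → r ≤ n → ∀ a, a = 1 ∨ a = 2 →
      ((Finset.Icc 1 2 ×ˢ Finset.Icc 1 r).filter (fun p => T p.1 p.2 r = a)).card = r)
    (hGap : ∀ a, ∀ p ∈ rowPos n T k a, ∀ q ∈ rowPos n T k a, p < q →
      ∃ r' ∈ rowPos n T l a, p < r' ∧ r' < q) :
    (∀ j, 1 ≤ j → j ≤ l → T 1 j l = T 1 j k) ∧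
    (∀ j, 1 ≤ j → j ≤ l → T 2 j l = T 2 (j + 1) k) := by
  constructor
  · intro j hj1 hj2
    set a := T 1 j k with hadef
    have ha : a = 1 ∨ a = 2 := hent 1 j k (by omega) (by omega) hj1 (by omega) hkn
    have e1 := prefix_counts n l k T hlk hl hkn hent hcard hGap j hj2 a ha
    have e2 := prefix_counts n l k T hlk hl hkn hent hcard hGap (j - 1) (by omega) a ha
    have c1 := count_succ (fun t => T 1 t l) j hj1 a
    have c2 := count_succ (fun t => T 1 t k) j hj1 a
    have hval : T 1 j l = 1 ∨ T 1 j l = 2 :=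
      hent 1 j l (by omega) (by omega) hj1 hj2 (by omega)
    by_cases h : T 1 j l = a
    · exact h
    · exfalso
      rw [if_neg h] at c1
      simp only [hadef.symm, eq_self_iff_true, if_true] at c2
      omega
  · intro j hj1 hj2
    set a := T 2 (j + 1) k with hadef
    have ha : a = 1 ∨ a = 2 := hent 2 (j + 1) k (by omega) (by omega) (by omega) (by omega) hkn
    have e1 := suffix_counts n l k T hlk hl hkn hent hcard hGap j hj1 (by omega) a ha
    have e2 := suffix_counts n l k T hlk hl hkn hent hcard hGap (j + 1) (by omega) (by omega) a ha
    have c1 := count_low (fun t => T 2 t l) j l hj1 hj2 a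
    have c2 := count_low (fun t => T 2 t k) (j + 1) k (by omega) (by omega) a
    by_cases h : T 2 j l = a
    · exact h
    · exfalso
      rw [if_neg h] at c1
      simp only [hadef.symm, eq_self_iff_true, if_true] at c2
      omega




lemma swap12_cases (v : ℕ) (h : v = 1 ∨ v = 2) :
    (v = 1 ∧ swap12 v = 2) ∨ (v = 2 ∧ swap12 v = 1) := by
  rcases h with rfl | rfl <;> simp [swap12]

lemma prod_split (r : ℕ) (f : ℕ × ℕ → Prop) [DecidablePred f] :
    ((Finset.Icc 1 2 ×ˢ Finset.Icc 1 r).filter f).card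
      = ((Finset.Icc 1 r).filter (fun t => f (1, t))).card
        + ((Finset.Icc 1 r).filter (fun t => f (2, t))).card := by
  have h1 : Finset.Icc 1 2 ×ˢ Finset.Icc 1 r
      = ({1} ×ˢ Finset.Icc 1 r) ∪ ({2} ×ˢ Finset.Icc 1 r) := by
    ext p
    simp only [Finset.mem_product, Finset.mem_union, Finset.mem_Icc, Finset.mem_singleton]
    omega
  have hdisj : Disjoint (({1} : Finset ℕ) ×ˢ Finset.Icc 1 r) ({2} ×ˢ Finset.Icc 1 r) := by
    rw [Finset.disjoint_left]
    intro p hp hq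
    simp only [Finset.mem_product, Finset.mem_singleton] at hp hq
    omega
  rw [h1, Finset.filter_union, Finset.card_union_of_disjoint
    (Finset.disjoint_filter_filter hdisj)]
  congr 1
  · rw [Finset.singleton_product, Finset.filter_map, Finset.card_map]
    rfl
  · rw [Finset.singleton_product, Finset.filter_map, Finset.card_map]
    rfl

lemma reflect_card (k : ℕ) (g : ℕ → Prop) [DecidablePred g] :
    ((Finset.Icc 1 k).filter (fun t => g (k + 1 - t))).card
      = ((Finset.Icc 1 k).filter g).card := by
  apply Finset.card_bij (fun t _ => k + 1 - t)
  · intro t ht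
    simp only [Finset.mem_filter, Finset.mem_Icc] at ht ⊢
    exact ⟨⟨by omega, by omega⟩, ht.2⟩
  · intro p hp q hq h
    simp only [Finset.mem_filter, Finset.mem_Icc] at hp hq
    omega
  · intro s hs
    simp only [Finset.mem_filter, Finset.mem_Icc] at hs
    refine ⟨k + 1 - s, ?_, by omega⟩
    simp only [Finset.mem_filter, Finset.mem_Icc]
    refine ⟨⟨by omega, by omega⟩, ?_⟩
    have : k + 1 - (k + 1 - s) = s := by omega
    rw [this]
    exact hs.2

def Tstar (n : ℕ) (lam : ℕ → ℕ) (i j k : ℕ) : ℕ :=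
  if 1 ≤ j ∧ j ≤ k ∧ k ≤ n ∧ i = 1 then lam j
  else if 1 ≤ j ∧ j ≤ k ∧ k ≤ n ∧ i = 2 then swap12 (lam (k + 1 - j))
  else 0

lemma Tstar1 (n : ℕ) (lam : ℕ → ℕ) {j k : ℕ} (h1 : 1 ≤ j) (h2 : j ≤ k) (h3 : k ≤ n) :
    Tstar n lam 1 j k = lam j := by
  simp [Tstar, h1, h2, h3]

lemma Tstar2 (n : ℕ) (lam : ℕ → ℕ) {j k : ℕ} (h1 : 1 ≤ j) (h2 : j ≤ k) (h3 : k ≤ n) :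
    Tstar n lam 2 j k = swap12 (lam (k + 1 - j)) := by
  simp [Tstar, h1, h2, h3]


lemma Tstar_card (n : ℕ) (lam : ℕ → ℕ)
    (hlam : ∀ j, 1 ≤ j → j ≤ n → lam j = 1 ∨ lam j = 2)
    (k : ℕ) (hk1 : 1 ≤ k) (hkn : k ≤ n) (a : ℕ) (ha : a = 1 ∨ a = 2) :
    ((Finset.Icc 1 2 ×ˢ Finset.Icc 1 k).filter
        (fun p => Tstar n lam p.1 p.2 k = a)).card = k := by
  rw [prod_split]
  have hflam : ∀ t ∈ Finset.Icc 1 k, lam t = 1 ∨ lam t = 2 := by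
    intro t ht
    simp only [Finset.mem_Icc] at ht
    exact hlam t ht.1 (le_trans ht.2 hkn)
  have e1 : (Finset.Icc 1 k).filter (fun t => Tstar n lam 1 t k = a)
      = (Finset.Icc 1 k).filter (fun t => lam t = a) := by
    apply Finset.filter_congr
    intro t ht
    simp only [Finset.mem_Icc] at ht
    rw [Tstar1 n lam ht.1 ht.2 hkn]
  have e2 : (Finset.Icc 1 k).filter (fun t => Tstar n lam 2 t k = a)
      = (Finset.Icc 1 k).filter (fun t => lam (k + 1 - t) = swap12 a) := by
    apply Finset.filter_congr
    intro t ht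
    simp only [Finset.mem_Icc] at ht
    rw [Tstar2 n lam ht.1 ht.2 hkn]
    have hv : lam (k + 1 - t) = 1 ∨ lam (k + 1 - t) = 2 :=
      hlam (k + 1 - t) (by omega) (by omega)
    rcases swap12_cases _ hv with ⟨hx, hy⟩ | ⟨hx, hy⟩ <;>
      rcases ha with rfl | rfl <;> simp [hx, hy, swap12]
  rw [e1, e2, reflect_card k (fun t => lam t = swap12 a)]
  have := two_filter (Finset.Icc 1 k) lam hflam
  simp only [Nat.card_Icc] at this
  rcases ha with rfl | rfl
  · simpa [swap12] using this.trans (by omega)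
  · simp only [swap12]
    norm_num
    omega


lemma Tstar_interlace (n : ℕ) (lam : ℕ → ℕ)
    (hlam : ∀ j, 1 ≤ j → j ≤ n → lam j = 1 ∨ lam j = 2)
    (k : ℕ) (hk1 : 1 ≤ k) (hkn : k ≤ n) (i j i' j' : ℕ)
    (hi1 : 1 ≤ i) (hi2 : i ≤ 2) (hj1 : 1 ≤ j) (hjk : j ≤ k)
    (hi1' : 1 ≤ i') (hi2' : i' ≤ 2) (hj1' : 1 ≤ j') (hjk' : j' ≤ k)
    (heq : Tstar n lam i j k = Tstar n lam i' j' k)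
    (hlt : Hc n i j k < Hc n i' j' k) :
    ∃ i'' j'', 1 ≤ i'' ∧ i'' ≤ 2 ∧ 1 ≤ j'' ∧ j'' ≤ k - 1 ∧
      Tstar n lam i'' j'' (k - 1) = Tstar n lam i j k ∧
      Hc n i j k < Hc n i'' j'' (k - 1) ∧ Hc n i'' j'' (k - 1) < Hc n i' j' k := by
  interval_cases i <;> interval_cases i'
  · -- i = 1, i' = 1
    have hjj' : j < j' := by
      simp only [Hc] at hlt; push_cast at hlt; omega
    refine ⟨1, j, le_refl 1, by omega, hj1, by omega, ?_, ?_, ?_⟩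
    · rw [Tstar1 n lam hj1 (by omega) (by omega), Tstar1 n lam hj1 hjk hkn]
    · simp only [Hc]; push_cast; omega
    · simp only [Hc]; push_cast; omega
  · -- i = 1, i' = 2
    rw [Tstar1 n lam hj1 hjk hkn, Tstar2 n lam hj1' hjk' hkn] at heq
    by_cases hjlt : j < k
    · refine ⟨1, j, le_refl 1, by omega, hj1, by omega, ?_, ?_, ?_⟩
      · rw [Tstar1 n lam hj1 (by omega) (by omega), Tstar1 n lam hj1 hjk hkn]
      · simp only [Hc]; push_cast; omega
      · simp only [Hc]; push_cast; omega
    · have hjk2 : j = k := by omega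
      have hj'2 : 2 ≤ j' := by
        by_contra h
        have hj'1 : j' = 1 := by omega
        rw [hj'1, hjk2] at heq
        have : k + 1 - 1 = k := by omega
        rw [this] at heq
        rcases swap12_cases (lam k) (hlam k hk1 hkn) with ⟨hx, hy⟩ | ⟨hx, hy⟩ <;>
          rw [hx] at heq <;> simp [swap12] at heq
      have hk2 : 2 ≤ k := by omega
      refine ⟨2, j' - 1, by omega, le_refl 2, by omega, by omega, ?_, ?_, ?_⟩
      · rw [Tstar2 n lam (by omega : 1 ≤ j' - 1) (by omega : j' - 1 ≤ k - 1) (by omega),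
          Tstar1 n lam hj1 hjk hkn]
        have hidx : k - 1 + 1 - (j' - 1) = k + 1 - j' := by omega
        rw [hidx, ← heq]
      · simp only [Hc]; push_cast; omega
      · simp only [Hc]; push_cast; omega
  · -- i = 2, i' = 1 : impossible
    exfalso
    simp only [Hc] at hlt; push_cast at hlt; omega
  · -- i = 2, i' = 2
    have hjj' : j < j' := by
      simp only [Hc] at hlt; push_cast at hlt; omega
    have hk2 : 2 ≤ k := by omega
    rw [Tstar2 n lam hj1 hjk hkn, Tstar2 n lam hj1' hjk' hkn] at heq
    refine ⟨2, j' - 1, by omega, le_refl 2, by omega, by omega, ?_, ?_, ?_⟩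
    · rw [Tstar2 n lam (by omega : 1 ≤ j' - 1) (by omega : j' - 1 ≤ k - 1) (by omega),
        Tstar2 n lam hj1 hjk hkn]
      have hidx : k - 1 + 1 - (j' - 1) = k + 1 - j' := by omega
      rw [hidx, ← heq]
    · simp only [Hc]; push_cast; omega
    · simp only [Hc]; push_cast; omega


section Unique

variable (n : ℕ) (lam : ℕ → ℕ) (T : ℕ → ℕ → ℕ → ℕ)

lemma unique_rows (hn : 1 ≤ n)
    (hent : ∀ i j r, 1 ≤ i → i ≤ 2 → 1 ≤ j → j ≤ r → r ≤ n → T i j r = 1 ∨ T i j r = 2)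
    (hcard : ∀ r, 1 ≤ r → r ≤ n → ∀ a, a = 1 ∨ a = 2 →
      ((Finset.Icc 1 2 ×ˢ Finset.Icc 1 r).filter (fun p => T p.1 p.2 r = a)).card = r)
    (hb : ∀ k, 1 ≤ k → k ≤ n → ∀ i j i' j',
      1 ≤ i → i ≤ 2 → 1 ≤ j → j ≤ k → 1 ≤ i' → i' ≤ 2 → 1 ≤ j' → j' ≤ k →
      T i j k = T i' j' k → Hc n i j k < Hc n i' j' k →
      ∃ i'' j'', 1 ≤ i'' ∧ i'' ≤ 2 ∧ 1 ≤ j'' ∧ j'' ≤ k - 1 ∧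
        T i'' j'' (k - 1) = T i j k ∧
        Hc n i j k < Hc n i'' j'' (k - 1) ∧ Hc n i'' j'' (k - 1) < Hc n i' j' k)
    (htop : ∀ j, 1 ≤ j → j ≤ n → T 1 j n = lam j) :
    ∀ k, 1 ≤ k → k ≤ n → ∀ j, 1 ≤ j → j ≤ k →
      T 1 j k = lam j ∧ T 2 j k = T 2 (j + (n - k)) n := by
  have main : ∀ d k, 1 ≤ k → k ≤ n → n - k = d → ∀ j, 1 ≤ j → j ≤ k →
      T 1 j k = lam j ∧ T 2 j k = T 2 (j + (n - k)) n := by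
    intro d
    induction d with
    | zero =>
      intro k hk1 hkn hd j hj1 hjk
      have hkn' : k = n := by omega
      subst hkn'
      refine ⟨htop j hj1 hjk, ?_⟩
      have : k - k = 0 := by omega
      rw [this, Nat.add_zero]
    | succ d ih =>
      intro k hk1 hkn hd j hj1 hjk
      have hk1n : k + 1 ≤ n := by omega
      have ihk := ih (k + 1) (by omega) hk1n (by omega)
      have htr := truncation n k (k + 1) T rfl hk1 hk1n hent hcard
        (gap_of_ITA n k (k + 1) T rfl hk1 hk1n (hb (k + 1) (by omega) hk1n))
      constructor
      · rw [htr.1 j hj1 hjk]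
        exact (ihk j hj1 (by omega)).1
      · rw [htr.2 j hj1 hjk]
        rw [(ihk (j + 1) (by omega) (by omega)).2]
        congr 1
        omega
  exact fun k hk1 hkn => main (n - k) k hk1 hkn rfl

lemma top_row2 (hn : 1 ≤ n)
    (hlam : ∀ j, 1 ≤ j → j ≤ n → lam j = 1 ∨ lam j = 2)
    (hent : ∀ i j r, 1 ≤ i → i ≤ 2 → 1 ≤ j → j ≤ r → r ≤ n → T i j r = 1 ∨ T i j r = 2)
    (hcard : ∀ r, 1 ≤ r → r ≤ n → ∀ a, a = 1 ∨ a = 2 →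
      ((Finset.Icc 1 2 ×ˢ Finset.Icc 1 r).filter (fun p => T p.1 p.2 r = a)).card = r)
    (hrows : ∀ k, 1 ≤ k → k ≤ n → ∀ j, 1 ≤ j → j ≤ k →
      T 1 j k = lam j ∧ T 2 j k = T 2 (j + (n - k)) n) :
    ∀ s, 1 ≤ s → s ≤ n → T 2 s n = swap12 (lam (n + 1 - s)) := by
  set q : ℕ → ℕ := fun k => ((Finset.Icc (n - k + 1) n).filter (fun t => T 2 t n = 1)).card
    with hqdef
  set c : ℕ → ℕ := fun k => ((Finset.Icc 1 k).filter (fun t => lam t = 1)).card with hcdef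
  have hq : ∀ k, k ≤ n → c k + q k = k := by
    intro k hk
    rcases Nat.eq_zero_or_pos k with rfl | hk1
    · simp [hqdef, hcdef, Finset.Icc_eq_empty (by omega : ¬ (n - 0 + 1 ≤ n))]
    have h1 := hcard k hk1 hk 1 (Or.inl rfl)
    rw [prod_split] at h1
    have e1 : (Finset.Icc 1 k).filter (fun t => T 1 t k = 1)
        = (Finset.Icc 1 k).filter (fun t => lam t = 1) := by
      apply Finset.filter_congr
      intro t ht
      simp only [Finset.mem_Icc] at ht
      rw [(hrows k hk1 hk t ht.1 ht.2).1]
    have e2 : ((Finset.Icc 1 k).filter (fun t => T 2 t k = 1)).card = q k := by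
      have e2' : (Finset.Icc 1 k).filter (fun t => T 2 t k = 1)
          = (Finset.Icc 1 k).filter (fun t => T 2 (t + (n - k)) n = 1) := by
        apply Finset.filter_congr
        intro t ht
        simp only [Finset.mem_Icc] at ht
        rw [(hrows k hk1 hk t ht.1 ht.2).2]
      rw [e2', hqdef]
      apply Finset.card_bij (fun t _ => t + (n - k))
      · intro t ht
        simp only [Finset.mem_filter, Finset.mem_Icc] at ht ⊢
        exact ⟨⟨by omega, by omega⟩, ht.2⟩
      · intro p hp q hq h
        omega
      · intro s hs
        simp only [Finset.mem_filter, Finset.mem_Icc] at hs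
        refine ⟨s - (n - k), ?_, by omega⟩
        simp only [Finset.mem_filter, Finset.mem_Icc]
        refine ⟨⟨by omega, by omega⟩, ?_⟩
        have : s - (n - k) + (n - k) = s := by omega
        rw [this]
        exact hs.2
    rw [e1, e2] at h1
    exact h1
  intro s hs1 hs2
  set k := n + 1 - s with hkdef
  have hsk : s = n - k + 1 := by omega
  have hk1 : 1 ≤ k := by omega
  have hkn : k ≤ n := by omega
  have h1 := hq k hkn
  have h2 := hq (k - 1) (by omega)
  have hc : c k = c (k - 1) + (if lam k = 1 then 1 else 0) := by
    simpa [hcdef] using count_succ lam k hk1 1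
  have hqk : q k = (if T 2 (n - k + 1) n = 1 then 1 else 0) + q (k - 1) := by
    have := count_low (fun t => T 2 t n) (n - k + 1) n (by omega) (by omega) 1
    rw [hqdef]
    simp only
    rw [this]
    have hi : n - k + 1 + 1 = n - (k - 1) + 1 := by omega
    rw [hi]
    omega
  have hTv : T 2 (n - k + 1) n = 1 ∨ T 2 (n - k + 1) n = 2 :=
    hent 2 (n - k + 1) n (by omega) (by omega) (by omega) (by omega) (le_refl n)
  have hlv : lam k = 1 ∨ lam k = 2 := hlam k hk1 hkn
  rw [hsk]
  rcases swap12_cases (lam k) hlv with ⟨hx, hy⟩ | ⟨hx, hy⟩ <;> rw [hy] <;>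
    rcases hTv with hT | hT <;> rw [hT] <;> rw [hx] at hc <;> rw [hT] at hqk <;>
    simp at hc hqk <;> omega
end Unique


/-- For every `n ≥ 1` and every string `λ ∈ {1,2}^n`, there is exactly one interlacing
triangular array `T` of rank `2` and height `n` whose first triangle has top row `λ`;
moreover this unique array satisfies `T^(2) = (T^(1))†`, i.e. each row of `T^(2)` is
the corresponding row of `T^(1)` reversed with the letters `1` and `2` exchanged. -/
theorem rank_two_unique (n : ℕ) (hn : 1 ≤ n) (lam : ℕ → ℕ)
    (hlam : ∀ j, 1 ≤ j → j ≤ n → lam j = 1 ∨ lam j = 2) :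
    (∃! T, T ∈ ITAFull 2 n ∧ ∀ j, 1 ≤ j → j ≤ n → T 1 j n = lam j) ∧
    (∀ T, T ∈ ITAFull 2 n → (∀ j, 1 ≤ j → j ≤ n → T 1 j n = lam j) →
        ∀ j k, 1 ≤ j → j ≤ k → k ≤ n → T 2 j k = swap12 (T 1 (k + 1 - j) k)) := by

  have hstar_ita : IsITA 2 n (Tstar n lam) := by
    refine ⟨?_, ?_, ?_⟩
    · intro i j k hi1 hi2 hj1 hjk hkn
      simp only [Finset.mem_Icc]
      interval_cases i
      · rw [Tstar1 n lam hj1 hjk hkn]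
        have := hlam j hj1 (le_trans hjk hkn)
        omega
      · rw [Tstar2 n lam hj1 hjk hkn]
        rcases swap12_cases (lam (k + 1 - j)) (hlam _ (by omega) (by omega)) with
          ⟨_, h⟩ | ⟨_, h⟩ <;> rw [h] <;> omega
    · intro k hk1 hkn a ha
      simp only [Finset.mem_Icc] at ha
      exact Tstar_card n lam hlam k hk1 hkn a (by omega)
    · intro k hk1 hkn i j i' j' hi1 hi2 hj1 hjk hi1' hi2' hj1' hjk' heq hlt
      exact Tstar_interlace n lam hlam k hk1 hkn i j i' j' hi1 hi2 hj1 hjk hi1' hi2'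
        hj1' hjk' heq hlt
  have hstar_norm : ∀ i j k, ¬(1 ≤ i ∧ i ≤ 2 ∧ 1 ≤ j ∧ j ≤ k ∧ k ≤ n) →
      Tstar n lam i j k = 0 := by
    intro i j k h
    unfold Tstar
    split_ifs with h1 h2
    · obtain ⟨a1, a2, a3, a4⟩ := h1
      exact absurd ⟨by omega, by omega, a1, a2, a3⟩ h
    · obtain ⟨a1, a2, a3, a4⟩ := h2
      exact absurd ⟨by omega, by omega, a1, a2, a3⟩ h
    · rfl
  have hstar_full : Tstar n lam ∈ ITAFull 2 n := ⟨hstar_ita, hstar_norm⟩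
  have hstar_top : ∀ j, 1 ≤ j → j ≤ n → Tstar n lam 1 j n = lam j :=
    fun j h1 h2 => Tstar1 n lam h1 h2 (le_refl n)
  have huniq : ∀ T, T ∈ ITAFull 2 n → (∀ j, 1 ≤ j → j ≤ n → T 1 j n = lam j) →
      T = Tstar n lam := by
    intro T hT htop
    obtain ⟨⟨hTa, hTb, hTc⟩, hTnorm⟩ := hT
    have hent : ∀ i j r, 1 ≤ i → i ≤ 2 → 1 ≤ j → j ≤ r → r ≤ n →
        T i j r = 1 ∨ T i j r = 2 := by
      intro i j r h1 h2 h3 h4 h5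
      have := hTa i j r h1 h2 h3 h4 h5
      simp only [Finset.mem_Icc] at this
      omega
    have hcard : ∀ r, 1 ≤ r → r ≤ n → ∀ a, a = 1 ∨ a = 2 →
        ((Finset.Icc 1 2 ×ˢ Finset.Icc 1 r).filter (fun p => T p.1 p.2 r = a)).card = r :=
      fun r h1 h2 a ha => hTb r h1 h2 a (Finset.mem_Icc.2 (by omega))
    have hrows := unique_rows n lam T hn hent hcard hTc htop
    have htop2 := top_row2 n lam T hn hlam hent hcard hrows
    funext i j k
    by_cases hsupp : 1 ≤ i ∧ i ≤ 2 ∧ 1 ≤ j ∧ j ≤ k ∧ k ≤ n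
    · obtain ⟨g1, g2, g3, g4, g5⟩ := hsupp
      interval_cases i
      · rw [Tstar1 n lam g3 g4 g5]
        exact (hrows k (by omega) g5 j g3 g4).1
      · rw [Tstar2 n lam g3 g4 g5]
        rw [(hrows k (by omega) g5 j g3 g4).2]
        rw [htop2 (j + (n - k)) (by omega) (by omega)]
        have hidx : n + 1 - (j + (n - k)) = k + 1 - j := by omega
        rw [hidx]
    · rw [hTnorm i j k hsupp, hstar_norm i j k hsupp]
  constructor
  · exact ⟨Tstar n lam, ⟨hstar_full, hstar_top⟩, fun T hT => huniq T hT.1 hT.2⟩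
  · intro T hT htopT j k hj1 hjk hkn
    rw [huniq T hT htopT]
    rw [Tstar2 n lam hj1 hjk hkn, Tstar1 n lam (by omega) (by omega) hkn]
end

section
/- Let P be a 1/2/3-puzzle on Δ_n. Then for every k = 1,…,n and every label a ∈ {1,2,3}, exactly k of the 3k boundary edges of the copy of Δ_k inside Δ_n are labeled a by P. -/
lemma face_count123 (p1 p2 p3 a : ℕ) (h1 : p1 ∈ Finset.Icc 1 3) (h2 : p2 ∈ Finset.Icc 1 3)
    (h3 : p3 ∈ Finset.Icc 1 3) (ha : a ∈ Finset.Icc 1 3)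
    (d12 : p1 ≠ p2) (d13 : p1 ≠ p3) (d23 : p2 ≠ p3) :
    (if p1 = a then 1 else 0) + (if p2 = a then 1 else 0) + (if p3 = a then 1 else 0) = 1 := by
  simp only [Finset.mem_Icc] at h1 h2 h3 ha
  obtain ⟨h1a, h1b⟩ := h1; obtain ⟨h2a, h2b⟩ := h2
  obtain ⟨h3a, h3b⟩ := h3; obtain ⟨haa, hab⟩ := ha
  interval_cases p1 <;> interval_cases p2 <;> interval_cases p3 <;> interval_cases a <;>
    simp_all

/-- For a `1/2/3`-puzzle `P` on `Δ_n`, each label `a ∈ {1,2,3}` occurs on exactly `k`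
of the `3k` boundary edges of the copy of `Δ_k` inside `Δ_n`: `k` times among the left
edges `P 1 0 y` (`y < k`), the right edges `P 2 x (k-1-x)` (`x < k`) and the bottom
edges `P 0 x 0` (`x < k`) together. -/
theorem boundary_label_count (n : ℕ) (P : ℕ → ℕ → ℕ → ℕ) (hP : IsPuzzle123 n P)
    (k : ℕ) (hk : 1 ≤ k) (hkn : k ≤ n) (a : ℕ) (ha : a ∈ Finset.Icc 1 3) :
    ((Finset.range k).filter (fun y => P 1 0 y = a)).card
      + ((Finset.range k).filter (fun x => P 2 x (k - 1 - x) = a)).card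
      + ((Finset.range k).filter (fun x => P 0 x 0 = a)).card = k := by
  obtain ⟨hbd, hup, hdn⟩ := hP
  simp only [Finset.card_filter]
  induction k, hk using Nat.le_induction with
  | base =>
    have h0 : (0 : ℕ) + 0 < n := by omega
    simp only [Finset.sum_range_one]
    exact face_count123 _ _ _ a (hbd 1 0 0 (by norm_num) h0) (hbd 2 0 0 (by norm_num) h0)
      (hbd 0 0 0 (by norm_num) h0) ha (hup 0 0 h0).1 (hup 0 0 h0).2.1 (hup 0 0 h0).2.2
  | succ k hk1 ih =>
    have ih' := ih (by omega)
    -- the strip of upward faces between diagonals k and k+1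
    have hU : ∑ x ∈ Finset.range (k + 1),
        ((if P 1 x (k - x) = a then 1 else 0) + (if P 2 x (k - x) = a then 1 else 0)
          + (if P 0 x (k - x) = a then 1 else 0)) = k + 1 := by
      rw [Finset.sum_congr rfl (g := fun _ => (1 : ℕ))
        (fun x hx => by
          have hx' : x + (k - x) < n := by
            simp only [Finset.mem_range] at hx; omega
          exact face_count123 _ _ _ a (hbd 1 _ _ (by norm_num) hx') (hbd 2 _ _ (by norm_num) hx')
            (hbd 0 _ _ (by norm_num) hx') ha (hup _ _ hx').1 (hup _ _ hx').2.1 (hup _ _ hx').2.2)]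
      simp
    have hD : ∑ x ∈ Finset.range k,
        ((if P 2 x (k - 1 - x) = a then 1 else 0) + (if P 0 x (k - x) = a then 1 else 0)
          + (if P 1 (x + 1) (k - 1 - x) = a then 1 else 0)) = k := by
      rw [Finset.sum_congr rfl (g := fun _ => (1 : ℕ))
        (fun x hx => by
          simp only [Finset.mem_range] at hx
          have hx' : x + (k - 1 - x) + 1 < n := by omega
          have hkx : k - 1 - x + 1 = k - x := by omega
          have c1 := (hdn x (k - 1 - x) hx').1
          have c2 := (hdn x (k - 1 - x) hx').2.1
          have c3 := (hdn x (k - 1 - x) hx').2.2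
          rw [hkx] at c1 c3
          have m1 := hbd 2 x (k - 1 - x) (by norm_num) (by omega)
          have m2 := hbd 0 x (k - x) (by norm_num) (by omega)
          have m3 := hbd 1 (x + 1) (k - 1 - x) (by norm_num) (by omega)
          exact face_count123 _ _ _ a m1 m2 m3 ha c1 c2 c3)]
      simp
    rw [Finset.sum_add_distrib, Finset.sum_add_distrib] at hU hD
    have hA : ∑ x ∈ Finset.range (k + 1), (if P 1 x (k - x) = a then 1 else 0)
        = (∑ x ∈ Finset.range k, (if P 1 (x + 1) (k - 1 - x) = a then 1 else 0))
          + (if P 1 0 k = a then 1 else 0) := by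
      have hsh : ∑ x ∈ Finset.range k, (if P 1 (x + 1) (k - (x + 1)) = a then (1 : ℕ) else 0)
          = ∑ x ∈ Finset.range k, (if P 1 (x + 1) (k - 1 - x) = a then 1 else 0) :=
        Finset.sum_congr rfl fun x _ => by
          rw [show k - (x + 1) = k - 1 - x from by omega]
      rw [Finset.sum_range_succ', hsh, Nat.sub_zero]
    have hB : ∑ x ∈ Finset.range (k + 1), (if P 0 x (k - x) = a then 1 else 0)
        = (∑ x ∈ Finset.range k, (if P 0 x (k - x) = a then 1 else 0))
          + (if P 0 k 0 = a then 1 else 0) := by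
      rw [Finset.sum_range_succ, Nat.sub_self]
    have hL : ∑ y ∈ Finset.range (k + 1), (if P 1 0 y = a then 1 else 0)
        = (∑ y ∈ Finset.range k, (if P 1 0 y = a then 1 else 0))
          + (if P 1 0 k = a then 1 else 0) := Finset.sum_range_succ _ _
    have hBot : ∑ x ∈ Finset.range (k + 1), (if P 0 x 0 = a then 1 else 0)
        = (∑ x ∈ Finset.range k, (if P 0 x 0 = a then 1 else 0))
          + (if P 0 k 0 = a then 1 else 0) := Finset.sum_range_succ _ _
    have hR : ∀ x, k + 1 - 1 - x = k - x := fun x => by omega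
    simp only [hR]
    omega
end
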